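/- Let x : [0,∞) → ℝ³ be differentiable with x'(t) = b(x(t)) for all t ≥ 0. If ‖x(0)‖ = 1, then ‖x(t)‖ = 1 for all t ≥ 0; that is, the unit sphere S² is invariant under the flow of b. -/

import Mathlib

open scoped RealInnerProductSpace

/-- The cubic Kolmogorov vector field on `ℝ³` (modelled as `EuclideanSpace ℝ (Fin 3)`):
`b(x)₁ = x₁(α₁ − α₁x₁² − (α₁+α₂+d₁)x₂² + d₂x₃²)`,
`b(x)₂ = x₂(α₂ + d₁x₁² − α₂x₂² − (α₂+α₃+d₃)x₃²)`,
`b(x)₃ = x₃(α₃ − (α₃+α₁+d₂)x₁² + d₃x₂² − α₃x₃²)`. -/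
noncomputable def bVF (α₁ α₂ α₃ d₁ d₂ d₃ : ℝ) (x : EuclideanSpace ℝ (Fin 3)) :
    EuclideanSpace ℝ (Fin 3) :=
  (WithLp.equiv 2 (Fin 3 → ℝ)).symm
    ![x 0 * (α₁ - α₁ * (x 0)^2 - (α₁ + α₂ + d₁) * (x 1)^2 + d₂ * (x 2)^2),
      x 1 * (α₂ + d₁ * (x 0)^2 - α₂ * (x 1)^2 - (α₂ + α₃ + d₃) * (x 2)^2),
      x 2 * (α₃ - (α₃ + α₁ + d₂) * (x 0)^2 + d₃ * (x 1)^2 - α₃ * (x 2)^2)]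

/-- The unit sphere is invariant under the flow of `b`: a solution starting on `S²`
stays on `S²`. -/
theorem sphere_invariant (α₁ α₂ α₃ d₁ d₂ d₃ : ℝ) (x : ℝ → EuclideanSpace ℝ (Fin 3))
    (hx : ∀ t : ℝ, 0 ≤ t → HasDerivAt x (bVF α₁ α₂ α₃ d₁ d₂ d₃ (x t)) t)
    (h0 : ‖x 0‖ = 1) :
    ∀ t : ℝ, 0 ≤ t → ‖x t‖ = 1 := by
  intro T hT
  set f : ℝ → ℝ := fun t => ⟪x t, x t⟫ - 1 with hfdef
  set g : ℝ → ℝ := fun t => 2 * (α₁ * (x t 0)^2 + α₂ * (x t 1)^2 + α₃ * (x t 2)^2) with hgdef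
  have key : ∀ y : EuclideanSpace ℝ (Fin 3),
      ⟪y, bVF α₁ α₂ α₃ d₁ d₂ d₃ y⟫ + ⟪bVF α₁ α₂ α₃ d₁ d₂ d₃ y, y⟫ =
      2 * (α₁ * (y 0)^2 + α₂ * (y 1)^2 + α₃ * (y 2)^2) * (1 - (⟪y, y⟫ - 1) - 1) := by
    intro y
    simp only [bVF, PiLp.inner_apply, RCLike.inner_apply, conj_trivial, Fin.sum_univ_three]
    simp only [WithLp.equiv_symm_apply, PiLp.toLp_apply, Matrix.cons_val_zero, Matrix.cons_val_one,
      Matrix.head_cons, Matrix.cons_val_two, Matrix.tail_cons]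
    ring
  have hderiv : ∀ t, 0 ≤ t → HasDerivAt f (-(g t) * f t) t := by
    intro t ht
    have h1 := ((hx t ht).inner ℝ (hx t ht)).sub_const 1
    refine h1.congr_deriv ?_
    rw [key (x t)]
    simp only [hgdef, hfdef]
    ring
  have hf0 : f 0 = 0 := by
    simp only [hfdef, real_inner_self_eq_norm_sq, h0]
    norm_num
  have hxc : ContinuousOn x (Set.Icc 0 T) := fun t ht =>
    ((hx t ht.1).continuousAt).continuousWithinAt
  have hgc : ContinuousOn g (Set.Icc 0 T) := by
    apply ContinuousOn.mul continuousOn_const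
    apply ContinuousOn.add
    apply ContinuousOn.add
    · exact continuousOn_const.mul (((EuclideanSpace.proj (𝕜 := ℝ) (0 : Fin 3)).continuous.comp_continuousOn hxc).pow 2)
    · exact continuousOn_const.mul (((EuclideanSpace.proj (𝕜 := ℝ) (1 : Fin 3)).continuous.comp_continuousOn hxc).pow 2)
    · exact continuousOn_const.mul (((EuclideanSpace.proj (𝕜 := ℝ) (2 : Fin 3)).continuous.comp_continuousOn hxc).pow 2)
  obtain ⟨C, hC⟩ := (isCompact_Icc (a := (0:ℝ)) (b := T)).exists_bound_of_continuousOn hgc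
  have hfc : ContinuousOn f (Set.Icc 0 T) := fun t ht =>
    ((hderiv t ht.1).continuousAt).continuousWithinAt
  have main := norm_le_gronwallBound_of_norm_deriv_right_le (f := f)
    (f' := fun t => -(g t) * f t) (δ := 0) (K := C) (ε := 0) (a := 0) (b := T) hfc
    (fun t ht => (hderiv t ht.1).hasDerivWithinAt)
    (by simp [hf0])
    (by
      intro t ht
      have h1 := hC t (Set.mem_Icc.mpr ⟨ht.1, le_of_lt ht.2⟩)
      simp only [Real.norm_eq_abs] at h1 ⊢
      rw [abs_mul, abs_neg]
      have := abs_nonneg (f t)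
      nlinarith [abs_nonneg (g t)])
  have hfT := main T (Set.mem_Icc.mpr ⟨hT, le_refl T⟩)
  rw [gronwallBound_ε0_δ0] at hfT
  have hfT0 : f T = 0 := by
    have := norm_nonneg (f T)
    have : ‖f T‖ = 0 := le_antisymm hfT this
    simpa using this
  have : ‖x T‖^2 = 1 := by
    have := hfT0
    simp only [hfdef, real_inner_self_eq_norm_sq] at this
    linarith
  nlinarith [norm_nonneg (x T)]
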